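/- arXiv:1907.02218 — 4 statements merged into one kernel-verified Lean document; each statement's English description precedes it below -/
import Mathlib

section
/- Let S = S₁ + ... + S_r where S₁,...,S_r are independent random variables each taking values in [0, T], with v = E[S]. Let X be distributed as Exp(S) conditioned on S (the minimum of independent Exp(S_i)'s). Then for all τ ≥ 0, Pr[X ≤ τ] ≥ 1 - exp(-(v/T)·(1 - e^{-Tτ})). -/
open MeasureTheory
open scoped ProbabilityTheory

/-- Pointwise convexity bound: for `0 ≤ x ≤ T`, `e^{-xτ} ≤ 1 - (x/T)(1 - e^{-Tτ})`. -/
lemma exp_neg_le_one_sub_aux {T x τ : ℝ} (hT : 0 < T) (hx0 : 0 ≤ x) (hxT : x ≤ T)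
    (hτ : 0 ≤ τ) :
    Real.exp (-(x * τ)) ≤ 1 - x / T * (1 - Real.exp (-(T * τ))) := by
  have ha : 0 ≤ 1 - x / T := by
    have : x / T ≤ 1 := (div_le_one hT).2 hxT
    linarith
  have hb : 0 ≤ x / T := div_nonneg hx0 hT.le
  have hconv := convexOn_exp.2 (Set.mem_univ (0 : ℝ)) (Set.mem_univ (-(T * τ)))
    ha hb (by ring)
  simp only [smul_eq_mul, mul_zero, zero_add] at hconv
  have harg : x / T * -(T * τ) = -(x * τ) := by
    field_simp
  rw [harg] at hconv
  calc Real.exp (-(x * τ)) ≤ (1 - x / T) * Real.exp 0 + x / T * Real.exp (-(T * τ)) := hconv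
    _ = 1 - x / T * (1 - Real.exp (-(T * τ))) := by rw [Real.exp_zero]; ring

/-- If `S = S₁ + ⋯ + S_r` is a sum of independent random variables in `[0, T]` with
`v = E[S]`, and `X ~ Exp(S)` conditionally on `S` (the minimum of independent `Exp(Sᵢ)`'s,
`Exp(0) = ∞`), so that `Pr[X ≤ τ] = E[1 - e^{-Sτ}]`, then
`Pr[X ≤ τ] ≥ 1 - exp(-(v/T)·(1 - e^{-Tτ}))`. -/
theorem sum_stochastic_seed_cdf_lower
    {Ω : Type*} [MeasureSpace Ω] [IsProbabilityMeasure (ℙ : Measure Ω)]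
    (T v : ℝ) (hT : 0 < T)
    (r : ℕ) (S : Fin r → Ω → ℝ)
    (hindep : ProbabilityTheory.iIndepFun S ℙ)
    (hmeas : ∀ i, Measurable (S i))
    (hS0 : ∀ i ω, 0 ≤ S i ω) (hST : ∀ i ω, S i ω ≤ T)
    (hv : ∫ ω, (∑ i, S i ω) = v)
    (τ : ℝ) (hτ : 0 ≤ τ) :
    ∫ ω, (1 - Real.exp (-((∑ i, S i ω) * τ)))
      ≥ 1 - Real.exp (-(v / T * (1 - Real.exp (-(T * τ))))) := by
  classical
  set c : ℝ := 1 - Real.exp (-(T * τ)) with hc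
  have hc0 : 0 ≤ c := by
    have : Real.exp (-(T * τ)) ≤ 1 := by
      rw [Real.exp_le_one_iff]
      nlinarith
    linarith
  -- g i = exp(-(S i ω * τ))
  set g : Fin r → Ω → ℝ := fun i ω => Real.exp (-(S i ω * τ)) with hgdef
  have hgmeas : ∀ i, Measurable (g i) := fun i =>
    ((hmeas i).mul_const τ).neg.exp
  have hg0 : ∀ i ω, 0 ≤ g i ω := fun i ω => (Real.exp_pos _).le
  have hg1 : ∀ i ω, g i ω ≤ 1 := fun i ω => by
    rw [hgdef]; simp only []
    rw [Real.exp_le_one_iff]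
    have := hS0 i ω
    nlinarith
  have hgint : ∀ i, Integrable (g i) ℙ := by
    intro i
    refine (integrable_const (1 : ℝ)).mono' (hgmeas i).aestronglyMeasurable ?_
    filter_upwards with ω
    rw [Real.norm_eq_abs, abs_of_nonneg (hg0 i ω)]
    exact hg1 i ω
  -- independence of the g i
  have hgindep : ProbabilityTheory.iIndepFun g ℙ :=
    hindep.comp (fun _ => fun x => Real.exp (-(x * τ)))
      (fun _ => ((measurable_id.mul_const τ).neg.exp))
  -- integral of a product over a finset factors
  have hprod : ∀ s : Finset (Fin r),
      ∫ ω, ∏ i ∈ s, g i ω = ∏ i ∈ s, ∫ ω, g i ω := by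
    intro s
    induction s using Finset.induction_on with
    | empty => simp
    | insert a s' hi ih =>
      have hint_prod : Integrable (fun ω => ∏ i ∈ s', g i ω) ℙ := by
        refine (integrable_const (1 : ℝ)).mono'
          (Finset.measurable_prod s' (fun i _ => hgmeas i)).aestronglyMeasurable ?_
        filter_upwards with ω
        rw [Real.norm_eq_abs, abs_of_nonneg (Finset.prod_nonneg fun i _ => hg0 i ω)]
        exact Finset.prod_le_one (fun i _ => hg0 i ω) (fun i _ => hg1 i ω)
      have hindepFun : ProbabilityTheory.IndepFun (∏ i ∈ s', g i) (g a) ℙ :=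
        hgindep.indepFun_finsetProd_of_notMem hgmeas hi
      have hfun : (fun ω => ∏ i ∈ s', g i ω) = ∏ i ∈ s', g i := by
        ext ω; rw [Finset.prod_apply]
      have hmul := ProbabilityTheory.IndepFun.integral_mul_eq_mul_integral hindepFun
        (by rw [← hfun]; exact hint_prod.aestronglyMeasurable) (hgint a).aestronglyMeasurable
      have h1 : (∫ ω, ∏ i ∈ insert a s', g i ω) = integral ℙ ((∏ i ∈ s', g i) * g a) := by
        congr 1
        ext ω
        rw [Pi.mul_apply, Finset.prod_insert hi, ← hfun]
        ring
      have h2 : integral ℙ (∏ i ∈ s', g i) = ∫ ω, ∏ i ∈ s', g i ω := by rw [← hfun]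
      rw [h1, hmul, h2, ih, Finset.prod_insert hi]
      ring
  -- Integrability of S i
  have hSint : ∀ i, Integrable (S i) ℙ := by
    intro i
    refine (integrable_const T).mono' (hmeas i).aestronglyMeasurable ?_
    filter_upwards with ω
    rw [Real.norm_eq_abs, abs_of_nonneg (hS0 i ω)]
    exact hST i ω
  set m : Fin r → ℝ := fun i => ∫ ω, S i ω with hm
  have hvm : ∑ i, m i = v := by
    rw [← hv, ← integral_finset_sum _ (fun i _ => hSint i)]
  have hm0 : ∀ i, 0 ≤ m i := fun i => integral_nonneg (fun ω => hS0 i ω)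
  -- per-index bound
  have hbound : ∀ i, ∫ ω, g i ω ≤ Real.exp (-(m i / T * c)) := by
    intro i
    have h1 : ∫ ω, g i ω ≤ 1 - m i / T * c := by
      have : ∫ ω, g i ω ≤ ∫ ω, (1 - S i ω / T * c) := by
        refine integral_mono (hgint i) ?_ ?_
        · refine Integrable.sub (integrable_const 1) ?_
          exact ((hSint i).div_const T).mul_const c
        · intro ω
          exact exp_neg_le_one_sub_aux hT (hS0 i ω) (hST i ω) hτ
      rwa [integral_sub (integrable_const 1) (((hSint i).div_const T).mul_const c),
        integral_const, probReal_univ, smul_eq_mul, one_mul,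
        integral_mul_const, integral_div] at this
    calc ∫ ω, g i ω ≤ 1 - m i / T * c := h1
      _ ≤ Real.exp (-(m i / T * c)) := by
          have := Real.add_one_le_exp (-(m i / T * c))
          linarith
  -- product bound
  have hgi0 : ∀ i, (0:ℝ) ≤ ∫ ω, g i ω := fun i => integral_nonneg (fun ω => hg0 i ω)
  have hprodbound : ∏ i, ∫ ω, g i ω ≤ Real.exp (-(v / T * c)) := by
    calc ∏ i, ∫ ω, g i ω ≤ ∏ i, Real.exp (-(m i / T * c)) :=
          Finset.prod_le_prod (fun i _ => hgi0 i) (fun i _ => hbound i)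
      _ = Real.exp (∑ i, -(m i / T * c)) := (Real.exp_sum _ _).symm
      _ = Real.exp (-(v / T * c)) := by
          congr 1
          rw [← hvm, Finset.sum_div, Finset.sum_mul, ← Finset.sum_neg_distrib]
  -- rewrite the main integrand
  have hrw : ∀ ω, Real.exp (-((∑ i, S i ω) * τ)) = ∏ i, g i ω := by
    intro ω
    rw [← Real.exp_sum]
    congr 1
    rw [Finset.sum_mul, ← Finset.sum_neg_distrib]
  have hSsum_int : Integrable (fun ω => Real.exp (-((∑ i, S i ω) * τ))) ℙ := by
    refine (integrable_const (1:ℝ)).mono'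
      ((Finset.measurable_sum Finset.univ (fun i _ => hmeas i)).mul_const τ).neg.exp.aestronglyMeasurable ?_
    filter_upwards with ω
    rw [Real.norm_eq_abs, abs_of_nonneg (Real.exp_pos _).le, Real.exp_le_one_iff]
    have : 0 ≤ ∑ i, S i ω := Finset.sum_nonneg (fun i _ => hS0 i ω)
    nlinarith
  have hmain : ∫ ω, (1 - Real.exp (-((∑ i, S i ω) * τ)))
      = 1 - ∫ ω, Real.exp (-((∑ i, S i ω) * τ)) := by
    rw [integral_sub (integrable_const 1) hSsum_int, integral_const, probReal_univ,
      smul_eq_mul, one_mul]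
  rw [ge_iff_le, hmain]
  have : ∫ ω, Real.exp (-((∑ i, S i ω) * τ)) = ∏ i, ∫ ω, g i ω := by
    rw [← hprod Finset.univ]
    congr 1
    ext ω
    exact hrw ω
  rw [this]
  linarith
end

section
/- Let S = S₁ + ... + S_r where S₁,...,S_r are independent random variables in [0, T], with v = E[S]. Let X ~ Exp(S) (conditionally on S). Then for all τ ≥ 0, Pr[X ≤ τ] ≥ 1 - e^{-vτ(1 - τT/2)}. -/
open MeasureTheory
open scoped ProbabilityTheory

private lemma exp_neg_le_quad {y : ℝ} (hy : 0 ≤ y) :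
    Real.exp (-y) ≤ 1 - y + y ^ 2 / 2 := by
  have h1 : 1 + y + y ^ 2 / 2 ≤ Real.exp y := Real.quadratic_le_exp_of_nonneg hy
  have h2 : Real.exp (-y) * Real.exp y = 1 := by
    rw [← Real.exp_add]; simp
  have h3 : 0 < Real.exp (-y) := Real.exp_pos _
  nlinarith [sq_nonneg y, sq_nonneg (y^2)]

/-- If `S = S₁ + ⋯ + S_r` is a sum of independent random variables in `[0, T]` with
`v = E[S]`, and `X ~ Exp(S)` conditionally on `S` (with `Exp(0) = ∞`), so that
`Pr[X ≤ τ] = E[1 - e^{-Sτ}]`, then `Pr[X ≤ τ] ≥ 1 - e^{-vτ(1 - τT/2)}`. -/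
theorem sum_stochastic_seed_cdf_lower'
    {Ω : Type*} [MeasureSpace Ω] [IsProbabilityMeasure (ℙ : Measure Ω)]
    (T v : ℝ) (hT : 0 < T)
    (r : ℕ) (S : Fin r → Ω → ℝ)
    (hindep : ProbabilityTheory.iIndepFun S ℙ)
    (hmeas : ∀ i, Measurable (S i))
    (hS0 : ∀ i ω, 0 ≤ S i ω) (hST : ∀ i ω, S i ω ≤ T)
    (hv : ∫ ω, (∑ i, S i ω) = v)
    (τ : ℝ) (hτ : 0 ≤ τ) :
    ∫ ω, (1 - Real.exp (-((∑ i, S i ω) * τ)))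
      ≥ 1 - Real.exp (-(v * τ * (1 - τ * T / 2))) := by
  set c : ℝ := 1 - τ * T / 2 with hc
  -- integrability of exp(-τ * S i)
  have hint : ∀ i, Integrable (fun ω => Real.exp (-τ * S i ω)) ℙ := by
    intro i
    refine (integrable_const (1 : ℝ)).mono' ((hmeas i).const_mul (-τ)).exp.aestronglyMeasurable ?_
    filter_upwards with ω
    rw [Real.norm_eq_abs, abs_of_pos (Real.exp_pos _)]
    exact Real.exp_le_one_iff.mpr (by nlinarith [hS0 i ω])
  have hintS : ∀ i, Integrable (S i) ℙ := by
    intro i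
    refine (integrable_const T).mono' (hmeas i).aestronglyMeasurable ?_
    filter_upwards with ω
    rw [Real.norm_eq_abs, abs_of_nonneg (hS0 i ω)]
    exact hST i ω
  -- per-term bound
  have hterm : ∀ i, ProbabilityTheory.mgf (S i) ℙ (-τ)
      ≤ Real.exp (-((∫ ω, S i ω) * τ * c)) := by
    intro i
    have hb : ProbabilityTheory.mgf (S i) ℙ (-τ) ≤ 1 - (∫ ω, S i ω) * τ * c := by
      have : ProbabilityTheory.mgf (S i) ℙ (-τ)
          ≤ ∫ ω, (1 - S i ω * τ * c) := by
        refine integral_mono (hint i) ((integrable_const 1).sub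
          (((hintS i).mul_const τ).mul_const c)) ?_
        intro ω
        have hx := hS0 i ω
        have hxT := hST i ω
        have hy : (0:ℝ) ≤ S i ω * τ := mul_nonneg hx hτ
        have h1 : Real.exp (-(S i ω * τ)) ≤ 1 - S i ω * τ + (S i ω * τ)^2 / 2 :=
          exp_neg_le_quad hy
        have h2 : (S i ω * τ)^2 / 2 ≤ S i ω * τ * (τ * T / 2) := by nlinarith [mul_le_mul_of_nonneg_left hxT (mul_nonneg hy hτ)]
        simp only [neg_mul]
        calc Real.exp (-(τ * S i ω)) = Real.exp (-(S i ω * τ)) := by ring_nf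
        _ ≤ 1 - S i ω * τ + (S i ω * τ)^2/2 := h1
        _ ≤ 1 - S i ω * τ * c := by rw [hc]; nlinarith
      rw [integral_sub (integrable_const 1) (((hintS i).mul_const τ).mul_const c)] at this
      simpa [integral_mul_const] using this
    calc ProbabilityTheory.mgf (S i) ℙ (-τ) ≤ 1 - (∫ ω, S i ω) * τ * c := hb
    _ ≤ Real.exp (-((∫ ω, S i ω) * τ * c)) := by
        have := Real.add_one_le_exp (-((∫ ω, S i ω) * τ * c)); linarith
  -- mgf of sum
  have hmgf : ∫ ω, Real.exp (-((∑ i, S i ω) * τ))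
      = ∏ i, ProbabilityTheory.mgf (S i) ℙ (-τ) := by
    rw [← hindep.mgf_sum hmeas Finset.univ]
    unfold ProbabilityTheory.mgf
    congr 1
    ext ω
    simp [Finset.sum_apply, mul_comm, neg_mul]
  have hprod : ∏ i, ProbabilityTheory.mgf (S i) ℙ (-τ)
      ≤ Real.exp (-(v * τ * c)) := by
    calc ∏ i, ProbabilityTheory.mgf (S i) ℙ (-τ)
        ≤ ∏ i, Real.exp (-((∫ ω, S i ω) * τ * c)) := by
          refine Finset.prod_le_prod (fun i _ => ProbabilityTheory.mgf_nonneg)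
            (fun i _ => hterm i)
    _ = Real.exp (∑ i, -((∫ ω, S i ω) * τ * c)) := by rw [Real.exp_sum]
    _ = Real.exp (-(v * τ * c)) := by
        congr 1
        rw [← hv, integral_finset_sum _ (fun i _ => hintS i)]
        simp [Finset.sum_mul, Finset.sum_neg_distrib]
  have hintexp : Integrable (fun ω => Real.exp (-((∑ i, S i ω) * τ))) ℙ := by
    refine (integrable_const (1 : ℝ)).mono'
      ((Finset.measurable_sum Finset.univ fun i _ => hmeas i).mul_const τ).neg.exp.aestronglyMeasurable ?_
    filter_upwards with ω
    rw [Real.norm_eq_abs, abs_of_pos (Real.exp_pos _)]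
    refine Real.exp_le_one_iff.mpr ?_
    have : 0 ≤ ∑ i, S i ω := Finset.sum_nonneg fun i _ => hS0 i ω
    nlinarith
  rw [integral_sub (integrable_const 1) hintexp, integral_const]
  simp only [smul_eq_mul, measure_univ, probReal_univ, ENNReal.toReal_one, one_mul]
  rw [hmgf]
  linarith [hprod]
end

section
/- Fix a key x with weight f_x > 0 in a bottom-k sample (k ≥ 2) where each key z independently draws seed(z) from a distribution SeedDist_z with continuous CDF positive on (0,∞). Define τ_x as the (k-1)-th smallest seed among keys other than x, and the estimator f̂_x = f_x / Pr_{s~SeedDist_x}[s < τ_x] if seed(x) < τ_x, else f̂_x = 0. Then E[f̂_x] = f_x. -/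
open MeasureTheory
open scoped ProbabilityTheory

/-- The `j`-th smallest element (1-indexed) of a multiset of reals. -/
noncomputable def orderStat (j : ℕ) (s : Multiset ℝ) : ℝ :=
  (s.sort (· ≤ ·)).getD (j - 1) 0

lemma sorted_getD_le_iff {l : List ℝ} (hl : l.Pairwise (· ≤ ·)) {j : ℕ}
    (hj1 : 1 ≤ j) (hj2 : j ≤ l.length) (t : ℝ) :
    l.getD (j - 1) 0 ≤ t ↔ j ≤ l.countP (fun a => decide (a ≤ t)) := by
  have hlen : j - 1 < l.length := by omega
  have hgetD : l.getD (j - 1) 0 = l[j-1] := by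
    rw [List.getD_eq_getElem?_getD, List.getElem?_eq_getElem hlen]; rfl
  rw [hgetD]
  constructor
  · intro h
    have h1 : l.countP (fun a => decide (a ≤ t)) =
        (l.take j).countP (fun a => decide (a ≤ t)) +
        (l.drop j).countP (fun a => decide (a ≤ t)) := by
      rw [← List.countP_append, List.take_append_drop]
    have h2 : (l.take j).countP (fun a => decide (a ≤ t)) = (l.take j).length := by
      rw [List.countP_eq_length]
      intro a ha
      rw [List.mem_iff_get] at ha
      obtain ⟨n, rfl⟩ := ha
      have hn : (n : ℕ) < (l.take j).length := n.isLt
      have hn' : (n : ℕ) < l.length := lt_of_lt_of_le hn (by simp [List.length_take])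
      have : (l.take j).get n = l[(n : ℕ)] := by
        simp [List.get_eq_getElem, List.getElem_take]
      rw [this]
      have hle : l[(n:ℕ)] ≤ l[j-1] := by
        rcases le_or_gt (n : ℕ) (j - 1) with h' | h'
        · exact hl.rel_get_of_le (a := ⟨n, hn'⟩) (b := ⟨j-1, hlen⟩) h'
        · exfalso
          have : (n : ℕ) < j := lt_of_lt_of_le hn (by simp [List.length_take])
          omega
      simpa using le_trans hle h
    have h3 : (l.take j).length = j := by simp [List.length_take]; omega
    omega
  · intro h
    by_contra hlt
    push_neg at hlt
    have h1 : l.countP (fun a => decide (a ≤ t)) =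
        (l.take (j-1)).countP (fun a => decide (a ≤ t)) +
        (l.drop (j-1)).countP (fun a => decide (a ≤ t)) := by
      rw [← List.countP_append, List.take_append_drop]
    have h2 : (l.drop (j-1)).countP (fun a => decide (a ≤ t)) = 0 := by
      rw [List.countP_eq_zero]
      intro a ha
      rw [List.mem_iff_get] at ha
      obtain ⟨n, rfl⟩ := ha
      have hn : (n : ℕ) < (l.drop (j-1)).length := n.isLt
      have hn' : j - 1 + (n : ℕ) < l.length := by
        simp [List.length_drop] at hn; omega
      have : (l.drop (j-1)).get n = l[j - 1 + (n:ℕ)] := by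
        simp [List.get_eq_getElem, List.getElem_drop]
      rw [this]
      have hle : l[j-1] ≤ l[j - 1 + (n:ℕ)] :=
        hl.rel_get_of_le (a := ⟨j-1, hlen⟩) (b := ⟨j-1+(n:ℕ), hn'⟩) (by simp)
      simp only [decide_eq_true_eq]
      intro hc
      exact absurd (le_trans hle hc) (not_le.mpr hlt)
    have h3 : (l.take (j-1)).countP (fun a => decide (a ≤ t)) ≤ j - 1 :=
      le_trans List.countP_le_length (by simp [List.length_take])
    omega

lemma orderStat_le_iff {s : Multiset ℝ} {j : ℕ} (hj1 : 1 ≤ j) (hj2 : j ≤ Multiset.card s)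
    (t : ℝ) : orderStat j s ≤ t ↔ j ≤ s.countP (fun a => a ≤ t) := by
  have hlen : (s.sort (· ≤ ·)).length = Multiset.card s := Multiset.length_sort _
  have hcount : s.countP (fun a => a ≤ t)
      = (s.sort (· ≤ ·)).countP (fun a => decide (a ≤ t)) := by
    conv_lhs => rw [← Multiset.sort_eq (s := s) (r := (· ≤ ·))]
    rfl
  rw [orderStat, hcount]
  exact sorted_getD_le_iff (Multiset.pairwise_sort (s := s) (r := (· ≤ ·))) hj1 (by omega) t

lemma orderStat_mem {s : Multiset ℝ} {j : ℕ} (hj1 : 1 ≤ j) (hj2 : j ≤ Multiset.card s) :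
    orderStat j s ∈ s := by
  have hlen : j - 1 < (s.sort (· ≤ ·)).length := by rw [Multiset.length_sort]; omega
  have : orderStat j s ∈ s.sort (· ≤ ·) := by
    rw [orderStat, List.getD_eq_getElem?_getD, List.getElem?_eq_getElem hlen]
    exact List.getElem_mem _
  rwa [Multiset.mem_sort] at this

lemma measurable_orderStat {β : Type*} [MeasurableSpace β] {ι' : Type*} [DecidableEq ι']
    (s : Finset ι') (v : ι' → β → ℝ) (hv : ∀ z, Measurable (v z)) {j : ℕ}
    (hj1 : 1 ≤ j) (hj2 : j ≤ s.card) :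
    Measurable fun b => orderStat j (s.val.map fun z => v z b) := by
  apply measurable_of_Iic
  intro t
  have hset : (fun b => orderStat j (s.val.map fun z => v z b)) ⁻¹' Set.Iic t
      = (fun b => ∑ z ∈ s, if v z b ≤ t then 1 else 0) ⁻¹' Set.Ici j := by
    ext b
    simp only [Set.mem_preimage, Set.mem_Iic, Set.mem_Ici]
    rw [orderStat_le_iff hj1 (by simpa using hj2),
      Multiset.countP_map, ← Finset.card_filter]
    rfl
  rw [hset]
  have hsum : Measurable fun b => ∑ z ∈ s, if v z b ≤ t then 1 else 0 := by
    apply Finset.measurable_sum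
    intro z _
    exact Measurable.ite ((hv z) measurableSet_Iic) measurable_const measurable_const
  exact hsum measurableSet_Ici

/-- Unbiasedness of the conditioned inverse-probability (Horvitz–Thompson) estimator in a
bottom-`k` sample: each key `z` independently draws `seed z` from `SeedDist z` (continuous
CDF, positive on `(0,∞)`); `τ_x` is the `(k-1)`-th smallest seed among keys other than `x`;
the estimator is `f_x / Pr_{s ~ SeedDist x}[s < τ_x]` if `seed x < τ_x` and `0` otherwise.
Its expectation is `f_x`. -/
theorem bottomk_inverse_probability_unbiased
    {Ω : Type*} [MeasureSpace Ω] [IsProbabilityMeasure (ℙ : Measure Ω)]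
    {ι : Type*} [Fintype ι] [DecidableEq ι]
    (k : ℕ) (hk : 2 ≤ k) (hcard : k ≤ Fintype.card ι)
    (seed : ι → Ω → ℝ) (hmeas : ∀ z, Measurable (seed z))
    (hindep : ProbabilityTheory.iIndepFun seed ℙ)
    (SeedDist : ι → Measure ℝ) (hprob : ∀ z, IsProbabilityMeasure (SeedDist z))
    (hlaw : ∀ z, Measure.map (seed z) ℙ = SeedDist z)
    (hcont : ∀ z, Continuous fun t : ℝ => ((SeedDist z) (Set.Iio t)).toReal)
    (hpos : ∀ z, ∀ t : ℝ, 0 < t → 0 < (SeedDist z) (Set.Iio t))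
    (hsupp : ∀ z, (SeedDist z) (Set.Iic 0) = 0)
    (x : ι) (f : ℝ) (hf : 0 < f) :
    ∫ ω,
        (if seed x ω <
            orderStat (k - 1) ((Finset.univ.erase x).val.map fun z => seed z ω) then
          f / ((SeedDist x) (Set.Iio
            (orderStat (k - 1) ((Finset.univ.erase x).val.map fun z => seed z ω)))).toReal
        else 0)
      = f := by
  classical
  haveI := hprob x
  set S : Finset ι := Finset.univ.erase x with hS
  let τ : Ω → ℝ := fun ω => orderStat (k - 1) (S.val.map fun z => seed z ω)
  let F : ℝ → ℝ := fun t => ((SeedDist x) (Set.Iio t)).toReal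
  let h : ℝ × ℝ → ℝ := fun p => if p.1 < p.2 then f / F p.2 else 0
  have hcarde : S.card = Fintype.card ι - 1 := by
    rw [hS, Finset.card_erase_of_mem (Finset.mem_univ x), Finset.card_univ]
  have hj1 : 1 ≤ k - 1 := by omega
  have hj2 : k - 1 ≤ S.card := by omega
  have hτmeas : Measurable τ := measurable_orderStat S seed hmeas hj1 hj2
  have hX : Measurable (seed x) := hmeas x
  -- independence of seed x and τ
  let g : ({z // z ∈ S} → ℝ) → ℝ :=
    fun v => orderStat (k - 1) ((Finset.univ : Finset {z // z ∈ S}).val.map v)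
  have hg : Measurable g :=
    measurable_orderStat Finset.univ (fun z (b : {z // z ∈ S} → ℝ) => b z)
      (fun z => measurable_pi_apply z) hj1 (by simpa [Fintype.card_coe] using hj2)
  have hτg : ∀ ω, τ ω = g (fun i : {z // z ∈ S} => seed i ω) := by
    intro ω
    show orderStat (k - 1) (S.val.map fun z => seed z ω)
      = orderStat (k - 1) ((Finset.univ : Finset {z // z ∈ S}).val.map
          fun i : {z // z ∈ S} => seed i ω)
    congr 1
    rw [Finset.univ_eq_attach]
    conv_lhs => rw [← Multiset.attach_map_val S.val, Multiset.map_map]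
    rfl
  have hindep2 : ProbabilityTheory.IndepFun (seed x) τ ℙ := by
    have h0 := hindep.indepFun_finset {x} S (by simp [hS]) hmeas
    have h1 := h0.comp
      (φ := fun v : ({z // z ∈ ({x} : Finset ι)} → ℝ) => v ⟨x, Finset.mem_singleton_self x⟩)
      (ψ := g) (measurable_pi_apply (X := fun _ : {z // z ∈ ({x} : Finset ι)} => ℝ) _) hg
    have h2 : ProbabilityTheory.IndepFun (seed x)
        (fun ω => g (fun i : {z // z ∈ S} => seed i ω)) ℙ := h1
    have : (fun ω => g (fun i : {z // z ∈ S} => seed (i : ι) ω)) = τ :=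
      funext fun ω => (hτg ω).symm
    rwa [this] at h2
  -- law of τ
  let ν : Measure ℝ := Measure.map τ ℙ
  haveI : IsProbabilityMeasure ν := Measure.isProbabilityMeasure_map hτmeas.aemeasurable
  have hjoint : Measure.map (fun ω => (seed x ω, τ ω)) ℙ = (SeedDist x).prod ν := by
    have := (ProbabilityTheory.indepFun_iff_map_prod_eq_prod_map_map
      hX.aemeasurable hτmeas.aemeasurable).mp hindep2
    rwa [hlaw x] at this
  have hhmeas : Measurable h :=
    Measurable.ite (measurableSet_lt measurable_fst measurable_snd)
      (measurable_const.div (((hcont x).measurable).comp measurable_snd)) measurable_const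
  -- a.e. positivity of τ
  have hae : ∀ᵐ ω ∂(ℙ : Measure Ω), 0 < τ ω := by
    have h1 : ∀ᵐ ω ∂(ℙ : Measure Ω), ∀ z : ι, 0 < seed z ω := by
      rw [MeasureTheory.ae_all_iff]
      intro z
      have hz0 : (ℙ : Measure Ω) (seed z ⁻¹' Set.Iic 0) = 0 := by
        rw [← Measure.map_apply (hmeas z) measurableSet_Iic, hlaw z]; exact hsupp z
      rw [MeasureTheory.ae_iff]
      simpa [Set.preimage, not_lt, Set.Iic] using hz0
    filter_upwards [h1] with ω hω
    have hmem : τ ω ∈ S.val.map fun z => seed z ω :=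
      orderStat_mem hj1 (by simpa using hj2)
    obtain ⟨z, _, heq⟩ := Multiset.mem_map.mp hmem
    exact heq ▸ hω z
  have haeν : ∀ᵐ t ∂ν, 0 < t :=
    (MeasureTheory.ae_map_iff hτmeas.aemeasurable measurableSet_Ioi).mpr hae
  -- sections
  have hsec : ∀ t : ℝ, (fun s => h (s, t)) = Set.indicator (Set.Iio t) (fun _ => f / F t) := by
    intro t; funext s
    by_cases hst : s < t <;> simp [h, Set.indicator, hst, Set.mem_Iio]
  have hFpos : ∀ t : ℝ, 0 < t → 0 < F t := fun t ht =>
    ENNReal.toReal_pos (hpos x t ht).ne' (measure_ne_top _ _)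
  have hcalc : ∀ t : ℝ, 0 < t → ∫ s, h (s, t) ∂(SeedDist x) = f := by
    intro t ht
    rw [hsec t, integral_indicator_const _ measurableSet_Iio, smul_eq_mul]
    exact mul_comm (F t) (f / F t) ▸ div_mul_cancel₀ f (hFpos t ht).ne'
  have hnn : ∀ p : ℝ × ℝ, 0 ≤ h p := by
    intro p
    by_cases hst : p.1 < p.2 <;>
      simp [h, hst, F, div_nonneg hf.le ENNReal.toReal_nonneg]
  have hInt : Integrable h ((SeedDist x).prod ν) := by
    rw [integrable_prod_iff' hhmeas.stronglyMeasurable.aestronglyMeasurable]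
    constructor
    · filter_upwards [haeν] with t _
      rw [hsec t]
      exact (integrable_const _).indicator measurableSet_Iio
    · apply (integrable_const f).congr
      filter_upwards [haeν] with t ht
      have hnorm : (fun s => ‖h (s, t)‖) = fun s => h (s, t) := by
        funext s; rw [Real.norm_eq_abs, abs_of_nonneg (hnn _)]
      rw [hnorm, hcalc t ht]
  calc ∫ ω, (if seed x ω < orderStat (k - 1) (S.val.map fun z => seed z ω) then
          f / ((SeedDist x) (Set.Iio
            (orderStat (k - 1) (S.val.map fun z => seed z ω)))).toReal
        else 0)
      = ∫ ω, h (seed x ω, τ ω) := rfl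
    _ = ∫ p, h p ∂(Measure.map (fun ω => (seed x ω, τ ω)) ℙ) :=
        (integral_map (hX.aemeasurable.prodMk hτmeas.aemeasurable)
          (hjoint ▸ hInt.aestronglyMeasurable)).symm
    _ = ∫ p, h p ∂((SeedDist x).prod ν) := by rw [hjoint]
    _ = ∫ t, ∫ s, h (s, t) ∂(SeedDist x) ∂ν := integral_prod_symm h hInt
    _ = ∫ t, f ∂ν := integral_congr_ae (by filter_upwards [haeν] with t ht; exact hcalc t ht)
    _ = f := by simp
end

section
/- Let each key x ∈ X have random weight S_x = Σ_{i=1}^{r_x} S_{x,i}, a sum of independent random variables in [0,T], with v_x = E[S_x] and V = Σ_x v_x. In a stochastic PPSWOR sample of size 1 (the key with smallest seed, seed(x) ~ Exp(S_x) conditionally on S_x, all independent), if 0 < ε ≤ 1/2 and V ≥ (1/ε)·ln(1/ε)·T, then each key x is selected with probability at least (1 - 2ε)·v_x/V. -/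
open MeasureTheory Set

namespace PPSWORAux

lemma chord {T s t : ℝ} (hT : 0 < T) (hs0 : 0 ≤ s) (hsT : s ≤ T) (_ht : 0 ≤ t) :
    Real.exp (-(s * t)) ≤ 1 - s * ((1 - Real.exp (-(T * t))) / T) := by
  have ha : (0:ℝ) ≤ 1 - s / T := by
    have : s / T ≤ 1 := (div_le_one hT).2 hsT
    linarith
  have hb : (0:ℝ) ≤ s / T := by positivity
  have hab : (1 - s / T) + s / T = 1 := by ring
  have key := convexOn_exp.2 (Set.mem_univ (0:ℝ)) (Set.mem_univ (-(T*t))) ha hb hab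
  simp only [smul_eq_mul, mul_zero, zero_add, Real.exp_zero, mul_one] at key
  have h1 : s / T * -(T * t) = -(s * t) := by field_simp
  rw [h1] at key
  calc Real.exp (-(s * t)) ≤ 1 - s / T + s / T * Real.exp (-(T * t)) := key
    _ = 1 - s * ((1 - Real.exp (-(T * t))) / T) := by field_simp; ring

lemma tangent (c y : ℝ) : Real.exp (-c) * (1 + c - y) ≤ Real.exp (-y) := by
  have h := Real.add_one_le_exp (c - y)
  have h2 : Real.exp (-c) * Real.exp (c - y) = Real.exp (-y) := by
    rw [← Real.exp_add]; ring_nf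
  nlinarith [Real.exp_pos (-c), Real.exp_pos (c - y)]

lemma one_sub_le_exp_neg (y : ℝ) : 1 - y ≤ Real.exp (-y) := by
  have := Real.add_one_le_exp (-y); linarith

lemma integrable_c_exp {c : ℝ} (hc : 0 < c) (a : ℝ) :
    IntegrableOn (fun t => c * Real.exp (-(c * t))) (Ioi a) := by
  have := (exp_neg_integrableOn_Ioi a hc).const_mul c
  simp only [neg_mul] at this; exact this

lemma integral_c_exp {c : ℝ} (hc : 0 < c) (a : ℝ) :
    ∫ t in Ioi a, c * Real.exp (-(c * t)) = Real.exp (-(c * a)) := by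
  have hderiv : ∀ t ∈ Ioi a, HasDerivAt (fun t => -Real.exp (-(c * t)))
      (c * Real.exp (-(c * t))) t := by
    intro t _
    have h1 : HasDerivAt (fun t : ℝ => -(c * t)) (-c) t := by
      have h := ((hasDerivAt_id t).const_mul c).neg; rw [mul_one] at h; exact h
    have := (h1.exp).neg
    exact this.congr_deriv (by ring)
  have htend : Filter.Tendsto (fun t => -Real.exp (-(c * t))) Filter.atTop (nhds 0) := by
    rw [show (0:ℝ) = -0 by ring]
    apply Filter.Tendsto.neg
    have h2 : Filter.Tendsto (fun t : ℝ => -(c * t)) Filter.atTop Filter.atBot := by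
      exact Filter.tendsto_neg_atBot_iff.mpr (by simpa using (Filter.tendsto_id.const_mul_atTop hc))
    exact Real.tendsto_exp_atBot.comp h2
  have := MeasureTheory.integral_Ioi_of_hasDerivAt_of_tendsto
    (f := fun t => -Real.exp (-(c * t))) (f' := fun t => c * Real.exp (-(c * t)))
    (Continuous.continuousWithinAt (by continuity)) hderiv (integrable_c_exp hc a) htend
  rw [this]; ring

section gcomp
variable {T v : ℝ}

private noncomputable def gfun (T v t : ℝ) : ℝ :=
  (1 - Real.exp (-(v * ((1 - Real.exp (-(T*t)))/T)))) - (v/(T+v))*(1 - Real.exp (-((T+v)*t)))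

private lemma gfun_hasDeriv (hT : 0 < T) (hv : 0 ≤ v) (t : ℝ) :
    HasDerivAt (gfun T v)
      (v * Real.exp (-(T*t)) * Real.exp (-(v * ((1 - Real.exp (-(T*t)))/T)))
        - v * Real.exp (-((T+v)*t))) t := by
  have hA : HasDerivAt (fun t : ℝ => -(T*t)) (-T) t := by
    have h := ((hasDerivAt_id t).const_mul T).neg; rw [mul_one] at h; exact h
  have hB := hA.exp
  have hC : HasDerivAt (fun t : ℝ => 1 - Real.exp (-(T*t)))
      (0 - Real.exp (-(T*t)) * -T) t := (hasDerivAt_const t 1).sub hB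
  have hG := (((hC.div_const T).const_mul v).neg).exp
  have hH := (hasDerivAt_const t 1).sub hG
  have hI : HasDerivAt (fun t : ℝ => -((T+v)*t)) (-(T+v)) t := by
    have h := ((hasDerivAt_id t).const_mul (T+v)).neg; rw [mul_one] at h; exact h
  have hL := ((hasDerivAt_const t 1).sub hI.exp).const_mul (v/(T+v))
  have := hH.sub hL
  have hT0 : T ≠ 0 := ne_of_gt hT
  have hTv : T + v ≠ 0 := by positivity
  exact this.congr_deriv (by simp only [Pi.neg_apply]; field_simp; ring)

lemma gcomp (hT : 0 < T) (hv : 0 ≤ v) {t : ℝ} (ht : 0 ≤ t) :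
    (v/(T+v))*(1 - Real.exp (-((T+v)*t)))
      ≤ 1 - Real.exp (-(v * ((1 - Real.exp (-(T*t)))/T))) := by
  have hmono : MonotoneOn (gfun T v) (Ici 0) := by
    apply monotoneOn_of_deriv_nonneg (convex_Ici 0)
    · unfold gfun; exact Continuous.continuousOn (by continuity)
    · intro s _
      exact (gfun_hasDeriv hT hv s).differentiableAt.differentiableWithinAt
    · intro s hs
      rw [interior_Ici] at hs
      rw [(gfun_hasDeriv hT hv s).deriv]
      have hs0 : (0:ℝ) ≤ s := le_of_lt hs
      have hle : v * ((1 - Real.exp (-(T*s)))/T) ≤ v * s := by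
        apply mul_le_mul_of_nonneg_left _ hv
        rw [div_le_iff₀ hT]
        have := one_sub_le_exp_neg (T*s)
        nlinarith [Real.exp_pos (-(T*s))]
      have hexp : Real.exp (-((T+v)*s))
          ≤ Real.exp (-(T*s)) * Real.exp (-(v * ((1 - Real.exp (-(T*s)))/T))) := by
        rw [← Real.exp_add]
        apply Real.exp_le_exp.2
        nlinarith
      nlinarith [mul_le_mul_of_nonneg_left hexp hv]
  have h0 : gfun T v 0 = 0 := by simp [gfun]
  have := hmono (self_mem_Ici) (mem_Ici.2 ht) ht
  rw [h0] at this
  unfold gfun at this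
  linarith

end gcomp

lemma integral_exp0 {b : ℝ} (hb : 0 < b) :
    ∫ t in Ioi (0:ℝ), Real.exp (-(b*t)) = 1/b := by
  have h := integral_c_exp hb 0
  rw [integral_const_mul] at h
  simp only [mul_zero, neg_zero, Real.exp_zero] at h
  field_simp at h ⊢
  linarith

/-- final explicit integral computation -/
lemma final_integral {T v c : ℝ} (hT : 0 < T) (hv : 0 ≤ v) (hc : 0 < c) :
    ∫ t in Ioi (0:ℝ), (c * Real.exp (-(c*t))) * ((v/(T+v))*(1 - Real.exp (-((T+v)*t))))
      = v / (c + T + v) := by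
  have hTv : 0 < T + v := by linarith
  have hcTv : 0 < c + T + v := by linarith
  have heq : ∀ t : ℝ, (c * Real.exp (-(c*t))) * ((v/(T+v))*(1 - Real.exp (-((T+v)*t))))
      = (v/(T+v)) * (c * Real.exp (-(c*t)))
        - (v/(T+v)) * (c/(c+T+v)) * ((c+T+v) * Real.exp (-((c+T+v)*t))) := by
    intro t
    have h3 : Real.exp (-((c+T+v)*t)) = Real.exp (-(c*t)) * Real.exp (-((T+v)*t)) := by
      rw [← Real.exp_add]; ring_nf
    rw [h3]
    field_simp
  rw [MeasureTheory.setIntegral_congr_fun measurableSet_Ioi (fun t _ => heq t)]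
  rw [MeasureTheory.integral_sub ((integrable_c_exp hc 0).const_mul _)
    ((integrable_c_exp hcTv 0).const_mul _)]
  simp only [mul_assoc]
  rw [integral_const_mul, integral_const_mul, integral_const_mul, integral_const_mul,
    integral_exp0 hc, integral_c_exp hcTv 0]
  simp only [mul_zero, neg_zero, Real.exp_zero]
  field_simp
  ring

section prob
open ProbabilityTheory
variable {Ω : Type*} [MeasureSpace Ω] [IsProbabilityMeasure (ℙ : Measure Ω)]

lemma integrable_bdd {f : Ω → ℝ} (hf : Measurable f) {C : ℝ} (h : ∀ ω, ‖f ω‖ ≤ C) :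
    Integrable f ℙ :=
  (integrable_const C).mono' hf.aestronglyMeasurable (Filter.Eventually.of_forall h)

lemma integrable_exp_neg {Z : Ω → ℝ} (hZ : Measurable Z) {t : ℝ} (ht : 0 ≤ t)
    (h0 : ∀ ω, 0 ≤ Z ω) : Integrable (fun ω => Real.exp (-(Z ω * t))) ℙ := by
  apply integrable_bdd (by measurability) (C := 1)
  intro ω
  rw [Real.norm_eq_abs, abs_of_nonneg (Real.exp_nonneg _)]
  apply Real.exp_le_one_iff.2
  simp only [neg_nonpos]
  exact mul_nonneg (h0 ω) ht

lemma exp_moment_le {Z : Ω → ℝ} (hZ : Measurable Z) {T t : ℝ} (hT : 0 < T)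
    (h0 : ∀ ω, 0 ≤ Z ω) (hZT : ∀ ω, Z ω ≤ T) (ht : 0 ≤ t) :
    ∫ ω, Real.exp (-(Z ω * t)) ≤ 1 - (∫ ω, Z ω) * ((1 - Real.exp (-(T*t)))/T) := by
  have hZint : Integrable Z ℙ := integrable_bdd hZ (C := T) (fun ω => by
    rw [Real.norm_eq_abs, abs_of_nonneg (h0 ω)]; exact hZT ω)
  have h2 : ∫ ω, (1 - Z ω * ((1 - Real.exp (-(T*t)))/T))
      = 1 - (∫ ω, Z ω) * ((1 - Real.exp (-(T*t)))/T) := by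
    rw [integral_sub (integrable_const 1) (hZint.mul_const _), integral_mul_const]
    simp
  rw [← h2]
  exact integral_mono (integrable_exp_neg hZ ht h0)
    ((integrable_const 1).sub (hZint.mul_const _))
    (fun ω => chord hT (h0 ω) (hZT ω) ht)

lemma exp_moment_ge {Z : Ω → ℝ} (hZ : Measurable Z) (hZint : Integrable Z ℙ) {t : ℝ}
    (ht : 0 ≤ t) (h0 : ∀ ω, 0 ≤ Z ω) :
    Real.exp (-((∫ ω, Z ω) * t)) ≤ ∫ ω, Real.exp (-(Z ω * t)) := by
  set c := (∫ ω, Z ω) * t with hc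
  have key : ∀ ω, Real.exp (-c) * (1 + c) - (Real.exp (-c) * t) * Z ω
      ≤ Real.exp (-(Z ω * t)) := by
    intro ω
    have := tangent c (Z ω * t)
    nlinarith [Real.exp_pos (-c)]
  have h2 : ∫ ω, (Real.exp (-c) * (1 + c) - (Real.exp (-c) * t) * Z ω)
      = Real.exp (-c) := by
    rw [integral_sub (integrable_const _) (hZint.const_mul _),
      integral_const_mul (Real.exp (-c) * t) Z, integral_const]
    simp only [probReal_univ, smul_eq_mul, one_mul]
    rw [hc]; ring
  rw [← h2]
  exact integral_mono ((integrable_const _).sub (hZint.const_mul _))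
    (integrable_exp_neg hZ ht h0) key

lemma integral_prod_of_indep {n : ℕ} {f : Fin n → Ω → ℝ} (hm : ∀ i, Measurable (f i))
    (h0 : ∀ i ω, 0 ≤ f i ω) (h1 : ∀ i ω, f i ω ≤ 1)
    (hind : iIndepFun f ℙ) :
    ∫ ω, ∏ i, f i ω = ∏ i, ∫ ω, f i ω := by
  suffices H : ∀ s : Finset (Fin n), ∫ ω, ∏ i ∈ s, f i ω = ∏ i ∈ s, ∫ ω, f i ω from H _
  intro s
  classical
  induction s using Finset.induction_on with
  | empty => simp
  | insert a s hi ih =>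
    have hint : ∀ (u : Finset (Fin n)), Integrable (fun ω => ∏ i ∈ u, f i ω) ℙ := by
      intro u
      apply integrable_bdd (by exact Finset.measurable_prod u (fun i _ => hm i)) (C := 1)
      intro ω
      rw [Real.norm_eq_abs, abs_of_nonneg (Finset.prod_nonneg (fun i _ => h0 i ω))]
      exact Finset.prod_le_one (fun i _ => h0 i ω) (fun i _ => h1 i ω)
    have hfn : (∏ j ∈ s, f j) = fun ω => ∏ i ∈ s, f i ω := by
      funext ω; exact Finset.prod_apply ω s f
    have hIndep : IndepFun (f a) (∏ j ∈ s, f j) ℙ :=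
      (hind.indepFun_finset_prod_of_notMem hm hi).symm
    have hmul := hIndep.integral_mul_eq_mul_integral
      (integrable_bdd (hm a) (C := 1) (fun ω => by
        rw [Real.norm_eq_abs, abs_of_nonneg (h0 a ω)]; exact h1 a ω)).aestronglyMeasurable
      (by rw [hfn]; exact (hint s).aestronglyMeasurable)
    simp only [Finset.prod_insert hi]
    have heq : ∫ ω, f a ω * ∏ i ∈ s, f i ω = (∫ ω, f a ω) * ∫ ω, ∏ i ∈ s, f i ω := by
      rw [hfn] at hmul
      exact hmul
    rw [heq, ih]

lemma iIndepFun_precomp {ι κ : Type*} {β : ι → Type*} {mβ : ∀ i, MeasurableSpace (β i)}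
    {f : ∀ i, Ω → β i} {g : κ → ι} (hg : Function.Injective g)
    (h : iIndepFun f ℙ) :
    iIndepFun (fun k => f (g k)) ℙ := by
  classical
  rw [iIndepFun_iff] at h ⊢
  intro s f' hf'
  let F : ι → Set Ω := fun i => if hi : ∃ k ∈ s, g k = i then f' hi.choose else ∅
  have hFg : ∀ k ∈ s, F (g k) = f' k := by
    intro k hk
    have hex : ∃ k' ∈ s, g k' = g k := ⟨k, hk, rfl⟩
    simp only [F]
    rw [dif_pos hex]
    exact congrArg f' (hg hex.choose_spec.2)
  have hmeas : ∀ i ∈ s.image g, MeasurableSet[(mβ i).comap (f i)] (F i) := by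
    intro i hi
    obtain ⟨k, hk, rfl⟩ := Finset.mem_image.1 hi
    rw [hFg k hk]
    exact hf' k hk
  have key := h (s.image g) hmeas
  have hIcap : (⋂ i ∈ s.image g, F i) = ⋂ k ∈ s, f' k := by
    ext ω
    simp only [Set.mem_iInter, Finset.mem_image]
    constructor
    · intro H k hk
      rw [← hFg k hk]
      exact H (g k) ⟨k, hk, rfl⟩
    · rintro H i ⟨k, hk, rfl⟩
      rw [hFg k hk]
      exact H k hk
  have hprod : ∏ i ∈ s.image g, ℙ (F i) = ∏ k ∈ s, ℙ (f' k) := by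
    rw [Finset.prod_image (fun a _ b _ hab => hg hab)]
    exact Finset.prod_congr rfl (fun k hk => by rw [hFg k hk])
  rw [hIcap, hprod] at key
  exact key

lemma exp_sum_moment_le {n : ℕ} {f : Fin n → Ω → ℝ} (hm : ∀ i, Measurable (f i))
    (h0 : ∀ i ω, 0 ≤ f i ω) {T : ℝ} (hT : 0 < T) (hfT : ∀ i ω, f i ω ≤ T)
    (hind : iIndepFun f ℙ) {t : ℝ} (ht : 0 ≤ t) :
    ∫ ω, Real.exp (-((∑ i, f i ω) * t))
      ≤ Real.exp (-((∑ i, ∫ ω, f i ω) * ((1 - Real.exp (-(T*t)))/T))) := by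
  set h := (1 - Real.exp (-(T*t)))/T with hh
  have h_nonneg : 0 ≤ h := by
    apply div_nonneg _ (le_of_lt hT)
    have : Real.exp (-(T*t)) ≤ 1 := Real.exp_le_one_iff.2 (neg_nonpos.2 (by positivity))
    linarith
  have hpt : ∀ ω, Real.exp (-((∑ i, f i ω) * t)) = ∏ i, Real.exp (-(f i ω * t)) := by
    intro ω
    rw [← Real.exp_sum]
    congr 1
    rw [Finset.sum_neg_distrib, Finset.sum_mul]
  have hind' : ProbabilityTheory.iIndepFun
      (fun i ω => Real.exp (-(f i ω * t))) ℙ :=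
    hind.comp (fun _ y => Real.exp (-(y * t))) (fun _ => by measurability)
  calc ∫ ω, Real.exp (-((∑ i, f i ω) * t))
      = ∫ ω, ∏ i, Real.exp (-(f i ω * t)) := by simp_rw [hpt]
    _ = ∏ i, ∫ ω, Real.exp (-(f i ω * t)) :=
        integral_prod_of_indep (fun i => by measurability)
          (fun i ω => Real.exp_nonneg _)
          (fun i ω => Real.exp_le_one_iff.2 (neg_nonpos.2 (mul_nonneg (h0 i ω) ht)))
          hind'
    _ ≤ ∏ i, Real.exp (-((∫ ω, f i ω) * h)) := by
        apply Finset.prod_le_prod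
        · exact fun i _ => integral_nonneg (fun ω => Real.exp_nonneg _)
        · intro i _
          calc ∫ ω, Real.exp (-(f i ω * t)) ≤ 1 - (∫ ω, f i ω) * h :=
                exp_moment_le (hm i) hT (h0 i) (hfT i) ht
            _ ≤ Real.exp (-((∫ ω, f i ω) * h)) := one_sub_le_exp_neg _
    _ = Real.exp (-((∑ i, ∫ ω, f i ω) * h)) := by
        rw [← Real.exp_sum]
        congr 1
        rw [Finset.sum_neg_distrib, Finset.sum_mul]

end prob

end PPSWORAux

open scoped ProbabilityTheory ENNReal
open PPSWORAux



open MeasureTheory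
open scoped ProbabilityTheory ENNReal

set_option maxHeartbeats 2000000 in
/-- Inclusion probability in a stochastic PPSWOR sample of size 1. Each key `x` has random
weight `S x = Σ_i S' x i`, a sum of independent random variables in `[0,T]`, with
`v x = E[S x]` and `V = Σ_x v x`. The seed of key `x` is `Exp(S x)`-distributed
conditionally on `S x` (with `Exp(0) = ∞`), the pairs `(S x, seed x)` being independent
across keys. If `0 < ε ≤ 1/2` and `V ≥ (1/ε)·ln(1/ε)·T`, then the key with the smallest
seed is `x` with probability at least `(1 - 2ε)·v x / V`. -/
theorem stochastic_ppswor_inclusion_probability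
    {Ω : Type*} [MeasureSpace Ω] [IsProbabilityMeasure (ℙ : Measure Ω)]
    {ι : Type*} [Fintype ι] [DecidableEq ι]
    (T ε : ℝ) (hT : 0 < T) (hε0 : 0 < ε) (hε : ε ≤ 1 / 2)
    (r : ι → ℕ) (S' : (x : ι) → Fin (r x) → Ω → ℝ)
    (hmeas : ∀ x i, Measurable (S' x i))
    (hS0 : ∀ x i ω, 0 ≤ S' x i ω) (hST : ∀ x i ω, S' x i ω ≤ T)
    (hindepS : ProbabilityTheory.iIndepFun
      (fun p : Σ x : ι, Fin (r x) => S' p.1 p.2) ℙ)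
    (S : ι → Ω → ℝ) (hS : ∀ x ω, S x ω = ∑ i, S' x i ω)
    (v : ι → ℝ) (hv : ∀ x, v x = ∫ ω, S x ω)
    (V : ℝ) (hV : V = ∑ x, v x)
    (hVT : V ≥ (1 / ε) * Real.log (1 / ε) * T)
    (seed : ι → Ω → ℝ≥0∞) (hseedmeas : ∀ x, Measurable (seed x))
    (hindep : ProbabilityTheory.iIndepFun
      (fun x ω => (S x ω, seed x ω)) ℙ)
    (hcondlaw : ∀ x, ∀ t : ℝ, 0 ≤ t → ∀ A : Set ℝ, MeasurableSet A →
      ℙ {ω | ENNReal.ofReal t < seed x ω ∧ S x ω ∈ A}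
        = ENNReal.ofReal (∫ ω in {ω | S x ω ∈ A}, Real.exp (-(S x ω * t))))
    (x : ι) :
    ℙ {ω | ∀ z, z ≠ x → seed x ω < seed z ω}
      ≥ ENNReal.ofReal ((1 - 2 * ε) * v x / V) := by 
  classical
  open Set in
  -- basic facts
  have hSfun : ∀ z, S z = fun ω => ∑ i, S' z i ω := fun z => funext (hS z)
  have hSmeas : ∀ z, Measurable (S z) := fun z => by
    rw [hSfun z]; exact Finset.measurable_sum _ (fun i _ => hmeas z i)
  have hSint : ∀ z, Integrable (S z) ℙ := fun z => by
    rw [hSfun z]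
    exact integrable_finset_sum _ (fun i _ => integrable_bdd (hmeas z i) (C := T) (fun ω => by
      rw [Real.norm_eq_abs, abs_of_nonneg (hS0 z i ω)]; exact hST z i ω))
  have hS0' : ∀ z ω, 0 ≤ S z ω := fun z ω => by
    rw [hS]; exact Finset.sum_nonneg fun i _ => hS0 z i ω
  have hv0 : ∀ z, 0 ≤ v z := fun z => by rw [hv]; exact integral_nonneg (hS0' z)
  have hvx_le_V : v x ≤ V := by
    rw [hV]; exact Finset.single_le_sum (fun z _ => hv0 z) (Finset.mem_univ x)
  have h2ε : (2:ℝ) ≤ 1/ε := by rw [le_div_iff₀ hε0]; linarith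
  have hlog2 : Real.log 2 ≤ Real.log (1/ε) := Real.log_le_log (by norm_num) h2ε
  have hlogpos : 0 < Real.log (1/ε) := Real.log_pos (by linarith)
  have hVpos : 0 < V := lt_of_lt_of_le (by positivity) hVT
  have hεV : Real.log (1/ε) * T ≤ ε * V := by
    have h1 : ε * ((1/ε) * Real.log (1/ε) * T) ≤ ε * V :=
      mul_le_mul_of_nonneg_left hVT hε0.le
    have h2 : ε * ((1/ε) * Real.log (1/ε) * T) = Real.log (1/ε) * T := by
      field_simp
    linarith
  set c : ℝ := V - v x + T/4 with hcdef
  have hc : 0 < c := by rw [hcdef]; linarith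
  -- (I) upper tail bound for key x
  have hindx : ProbabilityTheory.iIndepFun (S' x) ℙ := by
    have hinj : Function.Injective (fun i : Fin (r x) => (⟨x, i⟩ : Σ y : ι, Fin (r y))) :=
      fun a b hab => by simpa using hab
    exact iIndepFun_precomp (f := fun p : Σ y : ι, Fin (r y) => S' p.1 p.2)
      (g := fun i => ⟨x, i⟩) hinj hindepS
  have hvx_sum : v x = ∑ i, ∫ ω, S' x i ω := by
    rw [hv x, hSfun x]
    exact integral_finset_sum _ (fun i _ => integrable_bdd (hmeas x i) (C := T) (fun ω => by
      rw [Real.norm_eq_abs, abs_of_nonneg (hS0 x i ω)]; exact hST x i ω))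
  have hI : ∀ t : ℝ, 0 ≤ t → ∫ ω, Real.exp (-(S x ω * t))
      ≤ Real.exp (-(v x * ((1 - Real.exp (-(T*t)))/T))) := by
    intro t ht
    have key := exp_sum_moment_le (hmeas x) (hS0 x) hT (hST x) hindx ht
    rw [← hvx_sum] at key
    calc ∫ ω, Real.exp (-(S x ω * t)) = ∫ ω, Real.exp (-((∑ i, S' x i ω) * t)) := by
          simp_rw [hS x]
      _ ≤ Real.exp (-(v x * ((1 - Real.exp (-(T*t)))/T))) := key
  -- (II) lower tail bound for any z
  have hII : ∀ z, ∀ t : ℝ, 0 ≤ t →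
      Real.exp (-(v z * t)) ≤ ∫ ω, Real.exp (-(S z ω * t)) := by
    intro z t ht
    have := exp_moment_ge (hSmeas z) (hSint z) ht (hS0' z)
    rw [← hv z] at this
    exact this
  -- marginal law of each seed
  have hseedtail : ∀ z, ∀ t : ℝ, 0 ≤ t →
      ℙ {ω | ENNReal.ofReal t < seed z ω}
        = ENNReal.ofReal (∫ ω, Real.exp (-(S z ω * t))) := by
    intro z t ht
    have h := hcondlaw z t ht Set.univ MeasurableSet.univ
    have h1 : {ω | ENNReal.ofReal t < seed z ω ∧ S z ω ∈ Set.univ}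
        = {ω | ENNReal.ofReal t < seed z ω} := by ext ω; simp
    have h2 : {ω | S z ω ∈ Set.univ} = Set.univ := by ext ω; simp
    rw [h1, h2, Measure.restrict_univ] at h
    exact h
  -- independence of seeds
  have hseedind : ProbabilityTheory.iIndepFun
      (fun z ω => seed z ω) ℙ :=
    hindep.comp (fun _ => Prod.snd) (fun _ => measurable_snd)
  set E : Finset ι := Finset.univ.erase x with hE
  have hsumE : ∑ z ∈ E, v z = V - v x := by
    have := Finset.sum_erase_add Finset.univ v (Finset.mem_univ x)
    rw [hV]; rw [hE]; linarith
  -- each factor lower bound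
  have hfactor : ∀ z, ∀ t : ℝ, 0 ≤ t →
      ENNReal.ofReal (Real.exp (-(v z * t))) ≤ ℙ {ω | ENNReal.ofReal t < seed z ω} := by
    intro z t ht
    rw [hseedtail z t ht]
    exact ENNReal.ofReal_le_ofReal (hII z t ht)
  -- tuple variables
  set X : Ω → ℝ≥0∞ := seed x with hXdef
  set Y : Ω → (E → ℝ≥0∞) := fun ω (z : E) => seed z ω with hYdef
  have hXmeas : Measurable X := hseedmeas x
  have hYmeas : Measurable Y := measurable_pi_lambda _ (fun z => hseedmeas z)
  have hxE : x ∉ E := Finset.notMem_erase x _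
  have hXY : ProbabilityTheory.IndepFun X Y ℙ := by
    have h1 := hseedind.indepFun_finset {x} E
      (Finset.disjoint_singleton_left.2 hxE) (fun z => hseedmeas z)
    have h2 := h1.comp
      (φ := fun p : (({x} : Finset ι) → ℝ≥0∞) => p ⟨x, Finset.mem_singleton_self x⟩)
      (ψ := id) (measurable_pi_apply (X := fun _ : ({x} : Finset ι) => ℝ≥0∞) _) measurable_id
    exact h2
  have hmap : (ℙ : Measure Ω).map (fun ω => (X ω, Y ω)) = ((ℙ : Measure Ω).map X).prod ((ℙ : Measure Ω).map Y) :=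
    (ProbabilityTheory.indepFun_iff_map_prod_eq_prod_map_map hXmeas.aemeasurable
      hYmeas.aemeasurable).1 hXY
  haveI : IsProbabilityMeasure ((ℙ : Measure Ω).map X) := Measure.isProbabilityMeasure_map hXmeas.aemeasurable
  haveI : IsProbabilityMeasure ((ℙ : Measure Ω).map Y) := Measure.isProbabilityMeasure_map hYmeas.aemeasurable
  set C : Set (ℝ≥0∞ × (E → ℝ≥0∞)) := {p | ∀ z : E, p.1 < p.2 z} with hCdef
  have hCmeas : MeasurableSet C := by
    have hCi : C = ⋂ z : E, {p : ℝ≥0∞ × (E → ℝ≥0∞) | p.1 < p.2 z} := by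
      ext p; simp [hCdef, Set.mem_iInter]
    rw [hCi]
    exact MeasurableSet.iInter (fun z =>
      measurableSet_lt measurable_fst ((measurable_pi_apply z).comp measurable_snd))
  have hW : {ω | ∀ z, z ≠ x → seed x ω < seed z ω} = (fun ω => (X ω, Y ω)) ⁻¹' C := by
    ext ω
    simp only [Set.mem_setOf_eq, Set.mem_preimage, hCdef]
    constructor
    · intro H z
      exact H z (Finset.mem_erase.1 z.2).1
    · intro H z hz
      exact H ⟨z, Finset.mem_erase.2 ⟨hz, Finset.mem_univ z⟩⟩
  rw [ge_iff_le, hW, ← Measure.map_apply (hXmeas.prodMk hYmeas) hCmeas, hmap,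
    Measure.prod_apply hCmeas]
  -- slices
  have hslice_meas : ∀ s : ℝ≥0∞, MeasurableSet {y : E → ℝ≥0∞ | ∀ z : E, s < y z} := by
    intro s
    have heq : {y : E → ℝ≥0∞ | ∀ z : E, s < y z}
        = ⋂ z : E, (fun y : E → ℝ≥0∞ => y z) ⁻¹' (Set.Ioi s) := by
      ext y; simp [Set.mem_iInter]
    rw [heq]
    exact MeasurableSet.iInter (fun z => (measurable_pi_apply z) measurableSet_Ioi)
  have hslice : ∀ s : ℝ≥0∞, ((ℙ : Measure Ω).map Y) (Prod.mk s ⁻¹' C)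
      = ∏ z ∈ E, ℙ {ω | s < seed z ω} := by
    intro s
    have h0 : Prod.mk s ⁻¹' C = {y : E → ℝ≥0∞ | ∀ z : E, s < y z} := rfl
    rw [h0, Measure.map_apply hYmeas (hslice_meas s)]
    have h1 : Y ⁻¹' {y : E → ℝ≥0∞ | ∀ z : E, s < y z} = ⋂ z ∈ E, {ω | s < seed z ω} := by
      ext ω
      simp only [Set.mem_preimage, Set.mem_setOf_eq, Set.mem_iInter, hYdef]
      constructor
      · intro H z hz; exact H ⟨z, hz⟩
      · intro H z; exact H z z.2
    rw [h1]
    exact hseedind.meas_biInter (fun z _ => ⟨Set.Ioi s, measurableSet_Ioi, rfl⟩)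
  -- weight function and kernel set
  set g : ℝ → ℝ≥0∞ := fun t => ENNReal.ofReal (c * Real.exp (-(c*t))) with hgdef
  have hgmeas : Measurable g := by
    apply ENNReal.measurable_ofReal.comp
    exact (Real.measurable_exp.comp ((measurable_id.const_mul c).neg)).const_mul c
  set D : Set (ℝ≥0∞ × ℝ) := {p | p.1 ≤ ENNReal.ofReal p.2} with hDdef
  have hDmeas : MeasurableSet D :=
    measurableSet_le measurable_fst (ENNReal.measurable_ofReal.comp measurable_snd)
  set F : ℝ≥0∞ → ℝ → ℝ≥0∞ := fun s t => g t * D.indicator 1 (s, t) with hFdef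
  -- Claim A : slice lower bound
  have claimA : ∀ s : ℝ≥0∞, (∫⁻ t in Set.Ioi (0:ℝ), F s t)
      ≤ ∏ z ∈ E, ℙ {ω | s < seed z ω} := by
    intro s
    by_cases hs : s = ⊤
    · have hzero : ∀ t : ℝ, F s t = 0 := by
        intro t
        have : (s, t) ∉ D := by
          simp only [hDdef, Set.mem_setOf_eq, hs]
          exact fun h => (ENNReal.ofReal_lt_top).not_ge h
        simp [hFdef, Set.indicator_of_notMem this]
      simp only [hzero, lintegral_zero]
      exact zero_le
    · set u : ℝ := s.toReal with hudef
      have hu0 : 0 ≤ u := ENNReal.toReal_nonneg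
      have hsu : s = ENNReal.ofReal u := (ENNReal.ofReal_toReal hs).symm
      have step1 : (∫⁻ t in Set.Ioi (0:ℝ), F s t) ≤ ENNReal.ofReal (Real.exp (-(c*u))) := by
        have hptw : ∀ t ∈ Set.Ioi (0:ℝ), F s t ≤ (Set.Ici u).indicator g t := by
          intro t ht
          simp only [hFdef]
          by_cases hmem : (s, t) ∈ D
          · have htu : u ≤ t := by
              rw [hsu] at hmem
              exact (ENNReal.ofReal_le_ofReal_iff (le_of_lt ht)).1 hmem
            rw [Set.indicator_of_mem hmem, Set.indicator_of_mem (Set.mem_Ici.2 htu)]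
            simp
          · rw [Set.indicator_of_notMem hmem]
            simp
        calc (∫⁻ t in Set.Ioi (0:ℝ), F s t)
            ≤ ∫⁻ t in Set.Ioi (0:ℝ), (Set.Ici u).indicator g t :=
              setLIntegral_mono (hgmeas.indicator measurableSet_Ici) hptw
          _ = ∫⁻ t in Set.Ici u ∩ Set.Ioi 0, g t := by
              rw [lintegral_indicator measurableSet_Ici,
                Measure.restrict_restrict measurableSet_Ici]
          _ ≤ ∫⁻ t in Set.Ici u, g t := lintegral_mono_set Set.inter_subset_left
          _ = ENNReal.ofReal (∫ t in Set.Ici u, c * Real.exp (-(c*t))) := by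
              rw [ofReal_integral_eq_lintegral_ofReal
                ((integrableOn_Ici_iff_integrableOn_Ioi (by finiteness)).2 (integrable_c_exp hc u))
                (Filter.Eventually.of_forall (fun t => by positivity))]
          _ = ENNReal.ofReal (Real.exp (-(c*u))) := by
              rw [integral_Ici_eq_integral_Ioi, integral_c_exp hc u]
      have step2 : ENNReal.ofReal (Real.exp (-(c*u)))
          ≤ ∏ z ∈ E, ℙ {ω | s < seed z ω} := by
        have hcu : Real.exp (-(c*u)) ≤ Real.exp (-((V - v x) * u)) := by
          apply Real.exp_le_exp.2
          rw [hcdef]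
          nlinarith
        have hprodexp : Real.exp (-((V - v x) * u)) = ∏ z ∈ E, Real.exp (-(v z * u)) := by
          rw [← Real.exp_sum]
          congr 1
          rw [Finset.sum_neg_distrib, ← Finset.sum_mul, hsumE]
        calc ENNReal.ofReal (Real.exp (-(c*u)))
            ≤ ENNReal.ofReal (∏ z ∈ E, Real.exp (-(v z * u))) := by
              rw [← hprodexp]; exact ENNReal.ofReal_le_ofReal hcu
          _ = ∏ z ∈ E, ENNReal.ofReal (Real.exp (-(v z * u))) :=
              ENNReal.ofReal_prod_of_nonneg (fun z _ => Real.exp_nonneg _)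
          _ ≤ ∏ z ∈ E, ℙ {ω | s < seed z ω} := by
              apply Finset.prod_le_prod'
              intro z _
              rw [hsu]
              exact hfactor z u hu0
      exact le_trans step1 step2
  -- main chain
  have hmain1 : (∫⁻ s, (∫⁻ t in Set.Ioi (0:ℝ), F s t) ∂((ℙ : Measure Ω).map X))
      ≤ ∫⁻ s, ((ℙ : Measure Ω).map Y) (Prod.mk s ⁻¹' C) ∂((ℙ : Measure Ω).map X) :=
    lintegral_mono (fun s => le_trans (claimA s) (le_of_eq (hslice s).symm))
  have hFunc : Measurable (Function.uncurry F) := by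
    apply Measurable.mul
    · exact hgmeas.comp measurable_snd
    · exact measurable_one.indicator hDmeas
  have hswap : (∫⁻ s, (∫⁻ t in Set.Ioi (0:ℝ), F s t) ∂((ℙ : Measure Ω).map X))
      = ∫⁻ t in Set.Ioi (0:ℝ), ∫⁻ s, F s t ∂((ℙ : Measure Ω).map X) :=
    lintegral_lintegral_swap hFunc.aemeasurable
  have hinner : ∀ t : ℝ, (∫⁻ s, F s t ∂((ℙ : Measure Ω).map X))
      = g t * ((ℙ : Measure Ω).map X) (Set.Iic (ENNReal.ofReal t)) := by
    intro t
    have h1 : (fun s => F s t) = fun s => g t * (Set.Iic (ENNReal.ofReal t)).indicator 1 s := by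
      funext s
      simp only [hFdef, hDdef, Set.indicator_apply, Set.mem_Iic, Set.mem_setOf_eq]
      rfl
    rw [h1, lintegral_const_mul _ (measurable_one.indicator measurableSet_Iic),
      lintegral_indicator_one measurableSet_Iic]
  have hIic : ∀ t : ℝ, 0 ≤ t →
      ENNReal.ofReal (1 - Real.exp (-(v x * ((1 - Real.exp (-(T*t)))/T))))
        ≤ ((ℙ : Measure Ω).map X) (Set.Iic (ENNReal.ofReal t)) := by
    intro t ht
    rw [Measure.map_apply hXmeas measurableSet_Iic]
    have hpre : X ⁻¹' (Set.Iic (ENNReal.ofReal t)) = {ω | ENNReal.ofReal t < seed x ω}ᶜ := by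
      ext ω; simp [hXdef, Set.mem_Iic, not_lt]
    have hmeas2 : MeasurableSet {ω | ENNReal.ofReal t < seed x ω} :=
      (hseedmeas x) measurableSet_Ioi
    rw [hpre, prob_compl_eq_one_sub hmeas2, hseedtail x t ht]
    have h2 : ENNReal.ofReal (∫ ω, Real.exp (-(S x ω * t)))
        ≤ ENNReal.ofReal (Real.exp (-(v x * ((1 - Real.exp (-(T*t)))/T)))) :=
      ENNReal.ofReal_le_ofReal (hI t ht)
    have h3 : ENNReal.ofReal (1 - Real.exp (-(v x * ((1 - Real.exp (-(T*t)))/T))))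
        = 1 - ENNReal.ofReal (Real.exp (-(v x * ((1 - Real.exp (-(T*t)))/T)))) := by
      rw [ENNReal.ofReal_sub _ (Real.exp_nonneg _), ENNReal.ofReal_one]
    rw [h3]
    exact tsub_le_tsub_left h2 1
  have hmain2 : (∫⁻ t in Set.Ioi (0:ℝ),
        g t * ENNReal.ofReal (1 - Real.exp (-(v x * ((1 - Real.exp (-(T*t)))/T)))))
      ≤ ∫⁻ t in Set.Ioi (0:ℝ), ∫⁻ s, F s t ∂((ℙ : Measure Ω).map X) := by
    have hmono : Monotone (fun t : ℝ => ((ℙ : Measure Ω).map X) (Set.Iic (ENNReal.ofReal t))) := by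
      intro t1 t2 h12
      exact measure_mono (Set.Iic_subset_Iic.2 (ENNReal.ofReal_le_ofReal h12))
    have hbig : Measurable (fun t : ℝ => ∫⁻ s, F s t ∂((ℙ : Measure Ω).map X)) := by
      have : (fun t : ℝ => ∫⁻ s, F s t ∂((ℙ : Measure Ω).map X))
          = fun t => g t * ((ℙ : Measure Ω).map X) (Set.Iic (ENNReal.ofReal t)) := funext hinner
      rw [this]
      exact hgmeas.mul hmono.measurable
    apply setLIntegral_mono hbig
    intro t ht
    rw [hinner t]
    exact mul_le_mul_right (hIic t (le_of_lt ht)) _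
  -- evaluate the lower bound integral
  have hreal : ENNReal.ofReal ((1 - 2*ε) * v x / V)
      ≤ ∫⁻ t in Set.Ioi (0:ℝ),
          g t * ENNReal.ofReal (1 - Real.exp (-(v x * ((1 - Real.exp (-(T*t)))/T)))) := by
    have hcomb : ∀ t : ℝ,
        g t * ENNReal.ofReal (1 - Real.exp (-(v x * ((1 - Real.exp (-(T*t)))/T))))
          = ENNReal.ofReal ((c * Real.exp (-(c*t)))
              * (1 - Real.exp (-(v x * ((1 - Real.exp (-(T*t)))/T))))) := by
      intro t
      simp only [hgdef]
      rw [← ENNReal.ofReal_mul (mul_nonneg hc.le (Real.exp_nonneg _))]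
    simp_rw [hcomb]
    have c1 : Continuous fun t : ℝ => c * Real.exp (-(c*t)) :=
      continuous_const.mul (Real.continuous_exp.comp ((continuous_const.mul continuous_id).neg))
    have c2 : Continuous fun t : ℝ =>
        1 - Real.exp (-(v x * ((1 - Real.exp (-(T*t)))/T))) :=
      continuous_const.sub (Real.continuous_exp.comp
        ((continuous_const.mul ((continuous_const.sub (Real.continuous_exp.comp
          ((continuous_const.mul continuous_id).neg))).div_const T)).neg))
    have hφcont : Continuous (fun t : ℝ => (c * Real.exp (-(c*t)))
        * (1 - Real.exp (-(v x * ((1 - Real.exp (-(T*t)))/T))))) := c1.mul c2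
    have hφbd : ∀ t ∈ Set.Ioi (0:ℝ), ‖(c * Real.exp (-(c*t)))
        * (1 - Real.exp (-(v x * ((1 - Real.exp (-(T*t)))/T))))‖ ≤ c * Real.exp (-(c*t)) := by
      intro t ht
      have hh0 : 0 ≤ (1 - Real.exp (-(T*t)))/T := by
        apply div_nonneg _ hT.le
        have : Real.exp (-(T*t)) ≤ 1 :=
          Real.exp_le_one_iff.2 (neg_nonpos.2 (mul_nonneg hT.le (le_of_lt ht)))
        linarith
      have hfac0 : 0 ≤ 1 - Real.exp (-(v x * ((1 - Real.exp (-(T*t)))/T))) := by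
        have : Real.exp (-(v x * ((1 - Real.exp (-(T*t)))/T))) ≤ 1 :=
          Real.exp_le_one_iff.2 (neg_nonpos.2 (mul_nonneg (hv0 x) hh0))
        linarith
      have hfac1 : 1 - Real.exp (-(v x * ((1 - Real.exp (-(T*t)))/T))) ≤ 1 := by
        have := Real.exp_pos (-(v x * ((1 - Real.exp (-(T*t)))/T)))
        linarith
      rw [Real.norm_eq_abs,
        abs_of_nonneg (mul_nonneg (mul_nonneg hc.le (Real.exp_nonneg _)) hfac0)]
      exact mul_le_of_le_one_right (mul_nonneg hc.le (Real.exp_nonneg _)) hfac1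
    have hφint : IntegrableOn (fun t : ℝ => (c * Real.exp (-(c*t)))
        * (1 - Real.exp (-(v x * ((1 - Real.exp (-(T*t)))/T))))) (Set.Ioi 0) := by
      apply Integrable.mono' (integrable_c_exp hc 0)
        (hφcont.aestronglyMeasurable.restrict)
      exact (ae_restrict_iff' measurableSet_Ioi).2 (Filter.Eventually.of_forall hφbd)
    rw [← ofReal_integral_eq_lintegral_ofReal hφint
      ((ae_restrict_iff' measurableSet_Ioi).2 (Filter.Eventually.of_forall (fun t ht => by
        have h := hφbd t ht
        have h2 : 0 ≤ c * Real.exp (-(c*t)) := mul_nonneg hc.le (Real.exp_nonneg _)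
        have h3 : 0 ≤ 1 - Real.exp (-(v x * ((1 - Real.exp (-(T*t)))/T))) := by
          have hh0 : 0 ≤ (1 - Real.exp (-(T*t)))/T := by
            apply div_nonneg _ hT.le
            have : Real.exp (-(T*t)) ≤ 1 :=
              Real.exp_le_one_iff.2 (neg_nonpos.2 (mul_nonneg hT.le (le_of_lt ht)))
            linarith
          have : Real.exp (-(v x * ((1 - Real.exp (-(T*t)))/T))) ≤ 1 :=
            Real.exp_le_one_iff.2 (neg_nonpos.2 (mul_nonneg (hv0 x) hh0))
          linarith
        exact mul_nonneg h2 h3)))]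
    apply ENNReal.ofReal_le_ofReal
    -- real inequality
    have hlow : ∫ t in Set.Ioi (0:ℝ), (c * Real.exp (-(c*t)))
        * ((v x/(T+v x))*(1 - Real.exp (-((T+v x)*t))))
        ≤ ∫ t in Set.Ioi (0:ℝ), (c * Real.exp (-(c*t)))
        * (1 - Real.exp (-(v x * ((1 - Real.exp (-(T*t)))/T)))) := by
      apply setIntegral_mono_on _ hφint measurableSet_Ioi
      · intro t ht
        exact mul_le_mul_of_nonneg_left (gcomp hT (hv0 x) (le_of_lt ht))
          (mul_nonneg hc.le (Real.exp_nonneg _))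
      · have c3 : Continuous fun t : ℝ => (v x/(T+v x))*(1 - Real.exp (-((T+v x)*t))) :=
          continuous_const.mul (continuous_const.sub (Real.continuous_exp.comp
            ((continuous_const.mul continuous_id).neg)))
        apply Integrable.mono' (integrable_c_exp hc 0)
          ((c1.mul c3).aestronglyMeasurable.restrict)
        apply (ae_restrict_iff' measurableSet_Ioi).2
        apply Filter.Eventually.of_forall
        intro t ht
        have h1 : 0 ≤ 1 - Real.exp (-((T+v x)*t)) := by
          have : Real.exp (-((T+v x)*t)) ≤ 1 := by
            apply Real.exp_le_one_iff.2
            apply neg_nonpos.2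
            exact mul_nonneg (by linarith [hv0 x]) (le_of_lt ht)
          linarith
        have h2 : (v x/(T+v x))*(1 - Real.exp (-((T+v x)*t))) ≤ 1 := by
          have hp : v x/(T+v x) ≤ 1 := by
            rw [div_le_one (by linarith [hv0 x])]
            linarith
          have hq : 0 ≤ v x/(T+v x) := div_nonneg (hv0 x) (by linarith [hv0 x])
          have hr : 1 - Real.exp (-((T+v x)*t)) ≤ 1 := by
            have := Real.exp_pos (-((T+v x)*t)); linarith
          nlinarith
        have hq : 0 ≤ v x/(T+v x) := div_nonneg (hv0 x) (by linarith [hv0 x])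
        rw [Real.norm_eq_abs, Pi.mul_apply, abs_of_nonneg (mul_nonneg
          (mul_nonneg hc.le (Real.exp_nonneg _)) (mul_nonneg hq h1))]
        exact mul_le_of_le_one_right (mul_nonneg hc.le (Real.exp_nonneg _)) h2
    rw [final_integral hT (hv0 x) hc] at hlow
    -- arithmetic conclusion
    have hd : c + T + v x = V + 5*(T/4) := by rw [hcdef]; ring
    rw [hd] at hlow
    have hkey : 0.6931471803 * T ≤ ε * V := by
      nlinarith [Real.log_two_gt_d9, hεV, hlog2, hT.le,
        mul_le_mul_of_nonneg_right hlog2 hT.le,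
        mul_le_mul_of_nonneg_right Real.log_two_gt_d9.le hT.le]
    have hsc : (1 - 2*ε)*(V + 5*(T/4)) ≤ V := by nlinarith [hT.le, hε0.le]
    have harith : (1 - 2*ε) * v x / V ≤ v x / (V + 5*(T/4)) := by
      rw [div_le_div_iff₀ hVpos (by linarith)]
      nlinarith [mul_le_mul_of_nonneg_left hsc (hv0 x)]
    linarith
  calc ENNReal.ofReal ((1 - 2*ε) * v x / V)
      ≤ ∫⁻ t in Set.Ioi (0:ℝ),
          g t * ENNReal.ofReal (1 - Real.exp (-(v x * ((1 - Real.exp (-(T*t)))/T)))) := hreal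
    _ ≤ ∫⁻ t in Set.Ioi (0:ℝ), ∫⁻ s, F s t ∂((ℙ : Measure Ω).map X) := hmain2
    _ = ∫⁻ s, (∫⁻ t in Set.Ioi (0:ℝ), F s t) ∂((ℙ : Measure Ω).map X) := hswap.symm
    _ ≤ ∫⁻ s, ((ℙ : Measure Ω).map Y) (Prod.mk s ⁻¹' C) ∂((ℙ : Measure Ω).map X) := hmain1
end
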